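/- arXiv:2506.15997 — 2 statements merged into one kernel-verified Lean document; each statement's English description precedes it below -/
import Mathlib

section
/- Let G be a connected bridgeless graph with at least one edge, and let G' be the graph obtained from G by subdividing one edge (replacing an edge uv by a path u w v through a new vertex w). Then G' is connected and bridgeless, and the oriented strong diameter of G' is at least the oriented strong diameter of G. -/
open SimpleGraph

variable {V : Type*}

/-- A graph is bridgeless if no edge is a bridge. -/
def IsBridgeless (G : SimpleGraph V) : Prop := ∀ e : Sym2 V, ¬ G.IsBridge e

/-- `R` is an orientation of `G`: every arc of `R` is an edge of `G`, every edge of `G`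
receives exactly one direction. -/
def IsOrientation (G : SimpleGraph V) (R : V → V → Prop) : Prop :=
  (∀ u v, R u v → G.Adj u v) ∧ (∀ u v, G.Adj u v → (R u v ∨ R v u)) ∧
  (∀ u v, R u v → ¬ R v u)

/-- There is a directed walk of length `n` from `u` to `v` along the relation `R`. -/
def HasDirWalk (R : V → V → Prop) (u v : V) (n : ℕ) : Prop :=
  ∃ f : Fin (n + 1) → V, f 0 = u ∧ f (Fin.last n) = v ∧
    ∀ i : Fin n, R (f i.castSucc) (f i.succ)

/-- `R` is strongly connected. -/
def IsStrong (R : V → V → Prop) : Prop := ∀ u v : V, ∃ n, HasDirWalk R u v n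

/-- `R` is strongly connected within the vertex set `W`. -/
def IsStrongOn (R : V → V → Prop) (W : Set V) : Prop :=
  ∀ u ∈ W, ∀ v ∈ W, ∃ n, HasDirWalk R u v n

/-- Directed distance `∂(u,v)`: length of a shortest directed path from `u` to `v`. -/
noncomputable def ddist (R : V → V → Prop) (u v : V) : ℕ := sInf {n | HasDirWalk R u v n}

/-- `θ(u,v) = max{∂(u,v), ∂(v,u)}`. -/
noncomputable def theta (R : V → V → Prop) (u v : V) : ℕ := max (ddist R u v) (ddist R v u)

/-- The diameter of a (strong) orientation. -/
noncomputable def diamOr [Fintype V] (R : V → V → Prop) : ℕ :=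
  Finset.univ.sup fun p : V × V => theta R p.1 p.2

/-- The oriented diameter of `G`. -/
noncomputable def orientedDiam [Fintype V] (G : SimpleGraph V) : ℕ :=
  sInf {d | ∃ R : V → V → Prop, IsOrientation G R ∧ IsStrong R ∧ diamOr R = d}

/-- `A` is the arc set of a strongly connected subdigraph of `R` containing `u` and `v`. -/
def IsStrongSubOn (R : V → V → Prop) (u v : V) (A : Set (V × V)) : Prop :=
  (∀ p ∈ A, R p.1 p.2) ∧
  (∀ x ∈ insert u (insert v (Prod.fst '' A ∪ Prod.snd '' A)),
   ∀ y ∈ insert u (insert v (Prod.fst '' A ∪ Prod.snd '' A)),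
     Relation.ReflTransGen (fun a b => (a, b) ∈ A) x y)

/-- Strong distance `sd(u,v)`: minimum number of arcs of a strong subdigraph containing
`u` and `v`. -/
noncomputable def sdist (R : V → V → Prop) (u v : V) : ℕ :=
  sInf {n | ∃ A : Set (V × V), A.Finite ∧ A.ncard = n ∧ IsStrongSubOn R u v A}

/-- The strong diameter of a (strong) orientation. -/
noncomputable def sdiamOr [Fintype V] (R : V → V → Prop) : ℕ :=
  Finset.univ.sup fun p : V × V => sdist R p.1 p.2

/-- The oriented strong diameter of `G`. -/
noncomputable def orientedSDiam [Fintype V] (G : SimpleGraph V) : ℕ :=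
  sInf {d | ∃ R : V → V → Prop, IsOrientation G R ∧ IsStrong R ∧ sdiamOr R = d}

/-- `D` is a dominating set of `G`. -/
def IsDominating (G : SimpleGraph V) (D : Set V) : Prop :=
  ∀ v ∉ D, ∃ u ∈ D, G.Adj u v

/-- The domination number of `G`. -/
noncomputable def dominationNumber [Fintype V] (G : SimpleGraph V) : ℕ :=
  sInf {n | ∃ D : Set V, D.ncard = n ∧ IsDominating G D}

/-- `v` is associated with an isolated triangle. -/
def HasIsolatedTriangle (G : SimpleGraph V) (v : V) : Prop :=
  ∃ v₁ v₂ : V, G.Adj v v₁ ∧ G.Adj v₁ v₂ ∧ G.Adj v₂ v ∧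
    (G.neighborSet v₁).ncard = 2 ∧ (G.neighborSet v₂).ncard = 2

/-- `(G, D)` is a standard pair. -/
def IsStandardPair (G : SimpleGraph V) (D : Set V) : Prop :=
  IsBridgeless G ∧
  (∀ u ∈ D, ∀ v ∈ D, ¬ G.Adj u v) ∧
  (∀ v ∉ D, ∃! u, u ∈ D ∧ G.Adj u v) ∧
  (∀ v ∈ D, HasIsolatedTriangle G v)

/-- `H` is an alternative subgraph of `G` with respect to the dominating set `D`. -/
def IsAlternative (G : SimpleGraph V) (D : Set V) (H : G.Subgraph) : Prop :=
  IsBridgeless H.coe ∧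
  (H.verts ∩ D).Nonempty ∧
  (∀ x ∈ H.verts ∩ D, ∃ a b : V, a ≠ b ∧ a ∉ D ∧ b ∉ D ∧ H.Adj x a ∧ H.Adj x b ∧
    ∀ c, c ∉ D → H.Adj x c → c = a ∨ c = b) ∧
  (∀ y ∈ H.verts, y ∉ D → ∃ x ∈ H.verts ∩ D, H.Adj x y)

/-- `d_i(H⃗)`: maximum of `θ(u,v)` over pairs `u, v ∈ W` with `|{u,v} ∩ D| = i`. -/
noncomputable def dPairs (R : V → V → Prop) (W D : Set V) (i : ℕ) : ℕ :=
  sSup {k | ∃ u ∈ W, ∃ v ∈ W, ({u, v} ∩ D).ncard = i ∧ theta R u v = k}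

/-- `m(H⃗) = max{d₀ − 2, d₁ − 1, d₂}`. -/
noncomputable def mOf (R : V → V → Prop) (W D : Set V) : ℕ :=
  max (dPairs R W D 0 - 2) (max (dPairs R W D 1 - 1) (dPairs R W D 2))

/-- The graph obtained from `G` by subdividing the edge `uv` with a new vertex `none`. -/
def subdivide (G : SimpleGraph V) (u v : V) : SimpleGraph (Option V) :=
  SimpleGraph.fromRel fun a b =>
    match a, b with
    | some x, some y => G.Adj x y ∧ ¬(x = u ∧ y = v) ∧ ¬(x = v ∧ y = u)
    | some x, none => x = u ∨ x = v
    | none, _ => False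

/-- The graph obtained from `G` by attaching a pendant triangle at `v`. -/
def pendantTriangle (G : SimpleGraph V) (v : V) : SimpleGraph (V ⊕ Fin 2) :=
  SimpleGraph.fromRel fun a b =>
    match a, b with
    | Sum.inl x, Sum.inl y => G.Adj x y
    | Sum.inl x, Sum.inr _ => x = v
    | Sum.inr _, Sum.inl _ => False
    | Sum.inr i, Sum.inr j => i ≠ j

/-- `G` has a Hamiltonian path with endpoints `u` and `v`. -/
def HasHamiltonianPathBetween (G : SimpleGraph V) (u v : V) : Prop :=
  ∃ p : G.Walk u v, p.IsPath ∧ ∀ w : V, w ∈ p.support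


section Aux

variable {V : Type*}

lemma HasDirWalk.nil (R : V → V → Prop) (a : V) : HasDirWalk R a a 0 :=
  ⟨fun _ => a, rfl, rfl, fun i => i.elim0⟩

lemma HasDirWalk.tail {R : V → V → Prop} {a b c : V} {n : ℕ}
    (h : HasDirWalk R a b n) (hbc : R b c) : HasDirWalk R a c (n + 1) := by
  obtain ⟨f, hf0, hfl, hstep⟩ := h
  refine ⟨fun j => if h : (j : ℕ) < n + 1 then f ⟨j, h⟩ else c, ?_, ?_, ?_⟩
  · simpa using hf0
  · simp
  · intro i
    have hi1 : ((i.castSucc : Fin (n + 2)) : ℕ) = (i : ℕ) := rfl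
    have hi2 : ((i.succ : Fin (n + 2)) : ℕ) = (i : ℕ) + 1 := rfl
    by_cases hi : (i : ℕ) < n
    · have h1 : ((i.castSucc : Fin (n+2)) : ℕ) < n + 1 := by omega
      have h2 : ((i.succ : Fin (n+2)) : ℕ) < n + 1 := by omega
      simp only [h1, h2, dif_pos]
      have := hstep ⟨(i : ℕ), hi⟩
      simpa using this
    · have hieq : (i : ℕ) = n := by omega
      have h1 : ((i.castSucc : Fin (n+2)) : ℕ) < n + 1 := by omega
      have h2 : ¬ ((i.succ : Fin (n+2)) : ℕ) < n + 1 := by omega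
      simp only [h1, h2, dif_pos, dif_neg, not_false_iff]
      have : (⟨((i.castSucc : Fin (n+2)) : ℕ), h1⟩ : Fin (n+1)) = Fin.last n := by
        apply Fin.ext
        simp only [Fin.val_last]
        exact hieq
      rw [this, hfl]
      exact hbc

lemma rtg_of_hasDirWalk {R : V → V → Prop} :
    ∀ {n : ℕ} {a b : V}, HasDirWalk R a b n → Relation.ReflTransGen R a b := by
  intro n
  induction n with
  | zero =>
    rintro a b ⟨f, h0, hl, _⟩
    have : a = b := by rw [← h0, ← hl, Subsingleton.elim (0 : Fin 1) (Fin.last 0)]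
    exact this ▸ Relation.ReflTransGen.refl
  | succ n ih =>
    rintro a b ⟨f, h0, hl, hstep⟩
    have hstep0 := hstep 0
    rw [Fin.castSucc_zero, h0] at hstep0
    refine Relation.ReflTransGen.head hstep0 (ih ⟨fun i => f i.succ, rfl, ?_, ?_⟩)
    · show f (Fin.last n).succ = b
      rw [Fin.succ_last]; exact hl
    · intro i
      have := hstep i.succ
      rwa [← Fin.succ_castSucc] at this

lemma rtg_iff_walk {R : V → V → Prop} {a b : V} :
    Relation.ReflTransGen R a b ↔ ∃ n, HasDirWalk R a b n := by
  constructor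
  · intro h
    induction h with
    | refl => exact ⟨0, HasDirWalk.nil R a⟩
    | tail _ h2 ih => obtain ⟨n, w⟩ := ih; exact ⟨n + 1, w.tail h2⟩
  · rintro ⟨n, w⟩; exact rtg_of_hasDirWalk w

lemma subdivide_adj_some_some {G : SimpleGraph V} {u v x y : V} :
    (subdivide G u v).Adj (some x) (some y) ↔
      G.Adj x y ∧ ¬(x = u ∧ y = v) ∧ ¬(x = v ∧ y = u) := by
  simp only [subdivide, SimpleGraph.fromRel_adj]
  constructor
  · rintro ⟨hne, h | h⟩
    · exact h
    · exact ⟨h.1.symm, fun hc => h.2.2 ⟨hc.2, hc.1⟩, fun hc => h.2.1 ⟨hc.2, hc.1⟩⟩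
  · intro h
    exact ⟨fun hc => h.1.ne (Option.some.inj hc), Or.inl h⟩

lemma subdivide_adj_some_none {G : SimpleGraph V} {u v x : V} :
    (subdivide G u v).Adj (some x) none ↔ x = u ∨ x = v := by
  simp only [subdivide, SimpleGraph.fromRel_adj]
  constructor
  · rintro ⟨_, h | h⟩
    · exact h
    · exact h.elim
  · intro h
    exact ⟨by simp, Or.inl h⟩

lemma subdivide_adj_none_some {G : SimpleGraph V} {u v y : V} :
    (subdivide G u v).Adj none (some y) ↔ y = u ∨ y = v := by
  rw [SimpleGraph.adj_comm]; exact subdivide_adj_some_none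

lemma subdivide_not_adj_none_none {G : SimpleGraph V} {u v : V} :
    ¬ (subdivide G u v).Adj none none := SimpleGraph.irrefl _

lemma subdivide_comm {G : SimpleGraph V} {u v : V} :
    subdivide G u v = subdivide G v u := by
  ext a b
  cases a <;> cases b <;>
    simp only [subdivide, SimpleGraph.fromRel_adj] <;>
    constructor <;> rintro ⟨h1, h2⟩ <;> refine ⟨h1, ?_⟩ <;> tauto

/-- Lifting reachability where every edge of `G₀` lifts directly. -/
lemma reach_lift' {G₀ : SimpleGraph V} {H : SimpleGraph (Option V)}
    (h1 : ∀ c d, G₀.Adj c d → H.Adj (some c) (some d))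
    {a b : V} (hab : G₀.Reachable a b) : H.Reachable (some a) (some b) := by
  obtain ⟨p⟩ := hab
  induction p with
  | nil => exact SimpleGraph.Reachable.refl _
  | cons h q ih => exact (SimpleGraph.Adj.reachable (h1 _ _ h)).trans ih

/-- Lifting reachability where the edge `uv` can be detoured through `none`. -/
lemma reach_lift {G₀ : SimpleGraph V} {H : SimpleGraph (Option V)} {u v : V}
    (h1 : ∀ c d, G₀.Adj c d → ¬(c = u ∧ d = v) → ¬(c = v ∧ d = u) →
      H.Adj (some c) (some d))
    (h2 : H.Adj (some u) none) (h3 : H.Adj none (some v))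
    {a b : V} (hab : G₀.Reachable a b) : H.Reachable (some a) (some b) := by
  obtain ⟨p⟩ := hab
  induction p with
  | nil => exact SimpleGraph.Reachable.refl _
  | @cons c d e h q ih =>
    refine SimpleGraph.Reachable.trans ?_ ih
    by_cases hc1 : c = u ∧ d = v
    · obtain ⟨rfl, rfl⟩ := hc1
      exact (SimpleGraph.Adj.reachable h2).trans (SimpleGraph.Adj.reachable h3)
    · by_cases hc2 : c = v ∧ d = u
      · obtain ⟨rfl, rfl⟩ := hc2
        exact (SimpleGraph.Adj.reachable h3.symm).trans
          (SimpleGraph.Adj.reachable h2.symm)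
      · exact SimpleGraph.Adj.reachable (h1 _ _ h hc1 hc2)


lemma aux_reach_un {V : Type*} {G : SimpleGraph V} {u v : V} (huv : G.Adj u v)
    (hreach : (G \ SimpleGraph.fromEdgeSet {s(u, v)}).Reachable u v) :
    ((subdivide G u v) \ SimpleGraph.fromEdgeSet {s((some u : Option V), none)}).Reachable
      (some u) none := by
  have hne : u ≠ v := huv.ne
  have hlift : ((subdivide G u v) \
      SimpleGraph.fromEdgeSet {s((some u : Option V), none)}).Reachable
      (some u) (some v) := by
    refine reach_lift' ?_ hreach
    intro c d hcd
    rw [SimpleGraph.sdiff_adj] at hcd ⊢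
    rw [SimpleGraph.fromEdgeSet_adj] at hcd
    have hcdne : ¬(c = u ∧ d = v) ∧ ¬(c = v ∧ d = u) := by
      constructor <;> rintro ⟨rfl, rfl⟩ <;> exact hcd.2 ⟨by simp [Sym2.eq_iff], hcd.1.ne⟩
    refine ⟨subdivide_adj_some_some.mpr ⟨hcd.1, hcdne.1, hcdne.2⟩, ?_⟩
    rw [SimpleGraph.fromEdgeSet_adj]
    rintro ⟨hmem, -⟩
    simp [Sym2.eq_iff] at hmem
  refine hlift.trans (SimpleGraph.Adj.reachable ?_)
  rw [SimpleGraph.sdiff_adj]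
  refine ⟨subdivide_adj_some_none.mpr (Or.inr rfl), ?_⟩
  rw [SimpleGraph.fromEdgeSet_adj]
  rintro ⟨hmem, -⟩
  simp only [Set.mem_singleton_iff, Sym2.eq_iff] at hmem
  rcases hmem with ⟨h, -⟩ | ⟨-, h⟩
  · exact hne (Option.some.inj h).symm
  · exact absurd h (by simp)


lemma subdivide_connected {V : Type*} {G : SimpleGraph V} {u v : V} (huv : G.Adj u v)
    (hconn : G.Connected) : (subdivide G u v).Connected := by
  have hA_un : (subdivide G u v).Adj (some u) none := subdivide_adj_some_none.mpr (Or.inl rfl)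
  have hA_nv : (subdivide G u v).Adj none (some v) := subdivide_adj_none_some.mpr (Or.inr rfl)
  rw [SimpleGraph.connected_iff]
  refine ⟨?_, ⟨none⟩⟩
  have key : ∀ a b : V, (subdivide G u v).Reachable (some a) (some b) := fun a b =>
    reach_lift (fun c d h h1 h2 => subdivide_adj_some_some.mpr ⟨h, h1, h2⟩) hA_un hA_nv
      (hconn.preconnected a b)
  intro a b
  match a, b with
  | some a, some b => exact key a b
  | some a, none => exact (key a u).trans hA_un.reachable
  | none, some b => exact (hA_nv.reachable).trans (key v b)
  | none, none => exact SimpleGraph.Reachable.refl _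

lemma subdivide_bridgeless {V : Type*} {G : SimpleGraph V} {u v : V} (huv : G.Adj u v)
    (hbridgeless : IsBridgeless G) : IsBridgeless (subdivide G u v) := by
  have hne : u ≠ v := huv.ne
  have hb0 : (G \ SimpleGraph.fromEdgeSet {s(u, v)}).Reachable u v := by
    have hb := hbridgeless s(u, v)
    rw [SimpleGraph.isBridge_iff] at hb
    push_neg at hb
    exact hb
  have hvu : subdivide G u v = subdivide G v u := subdivide_comm
  intro e
  induction e using Sym2.ind with
  | _ a b =>
  rw [SimpleGraph.isBridge_iff]
  intro hnr
  by_cases hadj : (subdivide G u v).Adj a b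
  swap
  · apply hnr
    have hGc : G.Connected := (SimpleGraph.connected_iff_exists_forall_reachable G).mpr
      ⟨u, fun y => (not_not.mp (hbridgeless s(u, y))).mono (SimpleGraph.deleteEdges_le _)⟩
    rw [SimpleGraph.deleteEdges_eq_self.mpr ?_]
    · exact (subdivide_connected huv hGc).preconnected a b
    · rw [Set.disjoint_singleton_right, SimpleGraph.mem_edgeSet]; exact hadj
  apply hnr
  match a, b with
  | some x, some y =>
    obtain ⟨hxy, h1, h2⟩ := subdivide_adj_some_some.mp hadj
    have hb := hbridgeless s(x, y)
    rw [SimpleGraph.isBridge_iff] at hb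
    push_neg at hb
    have hreach := hb
    refine reach_lift (u := u) (v := v) ?_ ?_ ?_ hreach
    · intro c d hcd hc1 hc2
      rw [SimpleGraph.deleteEdges, SimpleGraph.sdiff_adj] at hcd ⊢
      rw [SimpleGraph.fromEdgeSet_adj] at hcd
      refine ⟨subdivide_adj_some_some.mpr ⟨hcd.1, hc1, hc2⟩, ?_⟩
      rw [SimpleGraph.fromEdgeSet_adj]
      rintro ⟨hmem, -⟩
      apply hcd.2
      refine ⟨?_, hcd.1.ne⟩
      simp only [Set.mem_singleton_iff, Sym2.eq_iff] at hmem ⊢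
      rcases hmem with ⟨h3, h4⟩ | ⟨h3, h4⟩
      · exact Or.inl ⟨Option.some.inj h3, Option.some.inj h4⟩
      · exact Or.inr ⟨Option.some.inj h3, Option.some.inj h4⟩
    · rw [SimpleGraph.deleteEdges, SimpleGraph.sdiff_adj]
      refine ⟨subdivide_adj_some_none.mpr (Or.inl rfl), ?_⟩
      rw [SimpleGraph.fromEdgeSet_adj]
      rintro ⟨hmem, -⟩
      simp [Sym2.eq_iff] at hmem
    · rw [SimpleGraph.deleteEdges, SimpleGraph.sdiff_adj]
      refine ⟨subdivide_adj_none_some.mpr (Or.inr rfl), ?_⟩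
      rw [SimpleGraph.fromEdgeSet_adj]
      rintro ⟨hmem, -⟩
      simp [Sym2.eq_iff] at hmem
  | some x, none =>
    rcases subdivide_adj_some_none.mp hadj with rfl | rfl
    · exact aux_reach_un huv hb0
    · rw [hvu]
      refine aux_reach_un huv.symm ?_
      have hb := hbridgeless s(x, u)
      rw [SimpleGraph.isBridge_iff] at hb
      push_neg at hb
      exact hb
  | none, some y =>
    rw [show s((none : Option V), some y) = s(some y, none) from Sym2.eq_swap]
    refine SimpleGraph.Reachable.symm ?_
    rcases subdivide_adj_none_some.mp hadj with rfl | rfl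
    · exact aux_reach_un huv hb0
    · rw [hvu]
      refine aux_reach_un huv.symm ?_
      have hb := hbridgeless s(y, u)
      rw [SimpleGraph.isBridge_iff] at hb
      push_neg at hb
      exact hb
  | none, none => exact absurd hadj (SimpleGraph.irrefl _)



lemma key_lemma {V : Type*} [Fintype V] (G : SimpleGraph V) (u v : V) (huv : G.Adj u v)
    (R' : Option V → Option V → Prop)
    (hor : IsOrientation (subdivide G u v) R') (hstr : IsStrong R')
    (hP : R' (some u) none) :
    ∃ R : V → V → Prop, IsOrientation G R ∧ IsStrong R ∧ sdiamOr R ≤ sdiamOr R' := by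
  obtain ⟨ho1, ho2, ho3⟩ := hor
  have huvne : u ≠ v := huv.ne
  have hno : ∀ x y : V, R' (some x) (some y) →
      G.Adj x y ∧ ¬(x = u ∧ y = v) ∧ ¬(x = v ∧ y = u) :=
    fun x y h => subdivide_adj_some_some.mp (ho1 _ _ h)
  have hnvu : ¬ R' none (some u) := ho3 _ _ hP
  have hout : ∀ w, R' none w → w = some v := by
    intro w hw
    have hadj := ho1 _ _ hw
    match w, hw, hadj with
    | none, hw, hadj => exact absurd hadj (SimpleGraph.irrefl _)
    | some t, hw, hadj =>
      rcases subdivide_adj_none_some.mp hadj with rfl | rfl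
      · exact absurd hw hnvu
      · rfl
  have hnv : R' none (some v) := by
    obtain ⟨n, hw⟩ := hstr none (some u)
    cases n with
    | zero =>
      obtain ⟨f, h0, hl, -⟩ := hw
      rw [Subsingleton.elim (0 : Fin 1) (Fin.last 0), hl] at h0
      exact absurd h0 (by simp)
    | succ m =>
      obtain ⟨f, h0, hl, hstep⟩ := hw
      have h1 := hstep 0
      rw [Fin.castSucc_zero, h0] at h1
      have h2 := hout _ h1
      rwa [h2] at h1
  have hnvn : ¬ R' (some v) none := ho3 _ _ hnv
  have hin : ∀ w, R' w none → w = some u := by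
    intro w hw
    have hadj := ho1 _ _ hw
    match w, hw, hadj with
    | none, hw, hadj => exact absurd hadj (SimpleGraph.irrefl _)
    | some t, hw, hadj =>
      rcases subdivide_adj_some_none.mp hadj with rfl | rfl
      · rfl
      · exact absurd hw hnvn
  set down : Option V → V := fun o => o.getD u with hdown
  set R : V → V → Prop := fun x y => R' (some x) (some y) ∨ (x = u ∧ y = v) with hR
  have horR : IsOrientation G R := by
    refine ⟨?_, ?_, ?_⟩
    · rintro x y (h | ⟨rfl, rfl⟩)
      · exact (hno _ _ h).1
      · exact huv
    · intro x y hxy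
      by_cases hc : x = u ∧ y = v
      · exact Or.inl (Or.inr hc)
      by_cases hc' : x = v ∧ y = u
      · exact Or.inr (Or.inr ⟨hc'.2, hc'.1⟩)
      rcases ho2 _ _ (subdivide_adj_some_some.mpr ⟨hxy, hc, hc'⟩) with h | h
      · exact Or.inl (Or.inl h)
      · exact Or.inr (Or.inl h)
    · rintro x y (h | ⟨hxu, hyv⟩) (h' | ⟨hyu, hxv⟩)
      · exact ho3 _ _ h h'
      · exact (hno _ _ h).2.2 ⟨hxv, hyu⟩
      · exact (hno _ _ h').2.2 ⟨hyv, hxu⟩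
      · exact huvne (hxu.symm.trans hxv)
  have proj : ∀ a b : Option V, Relation.ReflTransGen R' a b →
      Relation.ReflTransGen R (down a) (down b) := by
    intro a b h
    induction h with
    | refl => exact .refl
    | @tail b c hab hbc ih =>
      refine ih.trans ?_
      obtain _ | s := b <;> obtain _ | t := c
      · exact absurd (ho1 _ _ hbc) (SimpleGraph.irrefl _)
      · have htv : t = v := Option.some.inj (hout _ hbc)
        show Relation.ReflTransGen R u t
        rw [htv]
        exact Relation.ReflTransGen.single (Or.inr ⟨rfl, rfl⟩)
      · have hsu : s = u := Option.some.inj (hin _ hbc)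
        show Relation.ReflTransGen R s u
        rw [hsu]
      · exact Relation.ReflTransGen.single (Or.inl hbc)
  have hstrongR : IsStrong R := by
    intro x y
    have h1 := rtg_iff_walk.mpr (hstr (some x) (some y))
    exact rtg_iff_walk.mp (proj _ _ h1)
  have hsdist : ∀ x y : V, sdist R x y ≤ sdist R' (some x) (some y) := by
    intro x y
    have hS'ne : {n | ∃ A : Set (Option V × Option V), A.Finite ∧ A.ncard = n ∧
        IsStrongSubOn R' (some x) (some y) A}.Nonempty := by
      refine ⟨({p | R' p.1 p.2} : Set (Option V × Option V)).ncard,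
        {p | R' p.1 p.2}, Set.toFinite _, rfl, fun p hp => hp, ?_⟩
      intro a _ b _
      exact rtg_iff_walk.mpr (hstr a b)
    obtain ⟨A', hfin, hcard, hsub1, hsub2⟩ := Nat.sInf_mem hS'ne
    set m : Option V × Option V → V × V := fun q => (q.1.getD u, q.2.elim v id) with hm
    set A : Set (V × V) := m '' A' with hA
    have hclo : ∀ w : Option V, (w, none) ∈ A' ∨ (none, w) ∈ A' →
        (some u, none) ∈ A' ∧ (none, some v) ∈ A' := by
      intro w hw
      rcases hw with hw | hw
      · have hwu : w = some u := hin _ (hsub1 _ hw)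
        subst hwu
        have hmem1 : (none : Option V) ∈ insert (some x) (insert (some y)
            (Prod.fst '' A' ∪ Prod.snd '' A')) :=
          Set.mem_insert_of_mem _ (Set.mem_insert_of_mem _
            (Or.inr ⟨(some u, none), hw, rfl⟩))
        have hmem2 : (some u : Option V) ∈ insert (some x) (insert (some y)
            (Prod.fst '' A' ∪ Prod.snd '' A')) :=
          Set.mem_insert_of_mem _ (Set.mem_insert_of_mem _
            (Or.inl ⟨(some u, none), hw, rfl⟩))
        have hr := hsub2 none hmem1 (some u) hmem2
        rcases hr.cases_head with heq | ⟨c, hc, -⟩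
        · exact absurd heq (by simp)
        · have hcv : c = some v := hout _ (hsub1 _ hc)
          rw [hcv] at hc
          exact ⟨hw, hc⟩
      · have hwv : w = some v := hout _ (hsub1 _ hw)
        subst hwv
        have hmem1 : (some v : Option V) ∈ insert (some x) (insert (some y)
            (Prod.fst '' A' ∪ Prod.snd '' A')) :=
          Set.mem_insert_of_mem _ (Set.mem_insert_of_mem _
            (Or.inr ⟨(none, some v), hw, rfl⟩))
        have hmem2 : (none : Option V) ∈ insert (some x) (insert (some y)
            (Prod.fst '' A' ∪ Prod.snd '' A')) :=
          Set.mem_insert_of_mem _ (Set.mem_insert_of_mem _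
            (Or.inl ⟨(none, some v), hw, rfl⟩))
        have hr := hsub2 (some v) hmem1 none hmem2
        rcases hr.cases_tail with heq | ⟨c, -, hc⟩
        · exact absurd heq (by simp)
        · have hcu : c = some u := hin _ (hsub1 _ hc)
          rw [hcu] at hc
          exact ⟨hc, hw⟩
    have projA : ∀ a b : Option V,
        Relation.ReflTransGen (fun p q => (p, q) ∈ A') a b →
        Relation.ReflTransGen (fun s t => (s, t) ∈ A) (down a) (down b) := by
      intro a b h
      induction h with
      | refl => exact .refl
      | @tail b c hab hbc ih =>
        refine ih.trans ?_
        obtain _ | s := b <;> obtain _ | t := c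
        · exact absurd (ho1 _ _ (hsub1 _ hbc)) (SimpleGraph.irrefl _)
        · have htv : t = v := Option.some.inj (hout _ (hsub1 _ hbc))
          show Relation.ReflTransGen (fun s t => (s, t) ∈ A) u t
          rw [htv]
          refine Relation.ReflTransGen.single ⟨(none, some t), hbc, ?_⟩
          show (u, t) = (u, v)
          rw [htv]
        · have hsu : s = u := Option.some.inj (hin _ (hsub1 _ hbc))
          show Relation.ReflTransGen (fun s t => (s, t) ∈ A) s u
          rw [hsu]
        · exact Relation.ReflTransGen.single ⟨(some s, some t), hbc, rfl⟩
    have hsubA : IsStrongSubOn R x y A := by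
      constructor
      · rintro p ⟨q, hq, rfl⟩
        obtain ⟨q1, q2⟩ := q
        obtain _ | s := q1 <;> obtain _ | t := q2
        · exact absurd (ho1 _ _ (hsub1 _ hq)) (SimpleGraph.irrefl _)
        · exact Or.inr ⟨rfl, Option.some.inj (hout _ (hsub1 _ hq))⟩
        · exact Or.inr ⟨Option.some.inj (hin _ (hsub1 _ hq)), rfl⟩
        · exact Or.inl (hsub1 _ hq)
      · have c1 : ∀ a ∈ insert x (insert y (Prod.fst '' A ∪ Prod.snd '' A)),
            ∃ s ∈ insert (some x) (insert (some y) (Prod.fst '' A' ∪ Prod.snd '' A')),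
              Relation.ReflTransGen (fun s t => (s, t) ∈ A) a (down s) ∧
              Relation.ReflTransGen (fun s t => (s, t) ∈ A) (down s) a := by
          intro a ha
          rcases ha with ha | ha
          · exact ⟨some a, by rw [ha]; exact Set.mem_insert _ _, .refl, .refl⟩
          rcases ha with ha | ha
          · exact ⟨some a, by rw [ha]; exact Set.mem_insert_of_mem _ (Set.mem_insert _ _),
              .refl, .refl⟩
          rcases ha with ⟨p, hp, rfl⟩ | ⟨p, hp, rfl⟩
          · obtain ⟨q, hq, rfl⟩ := hp
            refine ⟨q.1, Set.mem_insert_of_mem _ (Set.mem_insert_of_mem _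
              (Or.inl ⟨q, hq, rfl⟩)), ?_, ?_⟩
            · obtain ⟨q1, q2⟩ := q
              obtain _ | s := q1
              · exact .refl
              · exact .refl
            · obtain ⟨q1, q2⟩ := q
              obtain _ | s := q1
              · exact .refl
              · exact .refl
          · obtain ⟨q, hq, rfl⟩ := hp
            obtain ⟨q1, q2⟩ := q
            obtain _ | t := q2
            · -- (m (q1, none)).2 = v, use s := none
              have hq1 : q1 = some u := hin _ (hsub1 _ hq)
              subst hq1
              obtain ⟨hc1, hc2⟩ := hclo (some u) (Or.inl hq)
              have hsv : (some v : Option V) ∈ insert (some x) (insert (some y)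
                  (Prod.fst '' A' ∪ Prod.snd '' A')) :=
                Set.mem_insert_of_mem _ (Set.mem_insert_of_mem _
                  (Or.inr ⟨(none, some v), hc2, rfl⟩))
              have hnn : (none : Option V) ∈ insert (some x) (insert (some y)
                  (Prod.fst '' A' ∪ Prod.snd '' A')) :=
                Set.mem_insert_of_mem _ (Set.mem_insert_of_mem _
                  (Or.inr ⟨(some u, none), hc1, rfl⟩))
              refine ⟨none, hnn, ?_, ?_⟩
              · -- from v to u
                exact projA _ _ (hsub2 _ hsv _ hnn)
              · -- from u to v
                exact Relation.ReflTransGen.single ⟨(some u, none), hc1, rfl⟩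
            · exact ⟨some t, Set.mem_insert_of_mem _ (Set.mem_insert_of_mem _
                (Or.inr ⟨(q1, some t), hq, rfl⟩)), .refl, .refl⟩
        intro a ha b hb
        obtain ⟨s, hs, has, hsa⟩ := c1 a ha
        obtain ⟨t, ht, hbt, htb⟩ := c1 b hb
        exact has.trans ((projA _ _ (hsub2 s hs t ht)).trans htb)
    calc sdist R x y ≤ A.ncard := Nat.sInf_le ⟨A, hfin.image _, rfl, hsubA⟩
      _ ≤ A'.ncard := Set.ncard_image_le hfin
      _ = sdist R' (some x) (some y) := hcard
  refine ⟨R, horR, hstrongR, ?_⟩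
  refine Finset.sup_le ?_
  rintro ⟨a, b⟩ -
  exact (hsdist a b).trans (Finset.le_sup (f := fun p : Option V × Option V =>
    sdist R' p.1 p.2) (Finset.mem_univ (some a, some b)))

lemma lift_exists {V : Type*} (G : SimpleGraph V) (u v : V) (huv : G.Adj u v)
    (R : V → V → Prop) (hor : IsOrientation G R) (hstr : IsStrong R) :
    ∃ R' : Option V → Option V → Prop, IsOrientation (subdivide G u v) R' ∧ IsStrong R' := by
  obtain ⟨ho1, ho2, ho3⟩ := hor
  have huvne : u ≠ v := huv.ne
  set R' : Option V → Option V → Prop := fun a b => match a, b with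
    | some x, some y => R x y ∧ ¬(x = u ∧ y = v) ∧ ¬(x = v ∧ y = u)
    | some x, none => (x = u ∧ R u v) ∨ (x = v ∧ R v u)
    | none, some y => (y = v ∧ R u v) ∨ (y = u ∧ R v u)
    | none, none => False with hR'
  have lift : ∀ x y : V, Relation.ReflTransGen R x y →
      Relation.ReflTransGen R' (some x) (some y) := by
    intro x y h
    induction h with
    | refl => exact .refl
    | @tail b c hab hbc ih =>
      refine ih.trans ?_
      by_cases hc1 : b = u ∧ c = v
      · rw [hc1.1, hc1.2] at hbc ⊢
        exact (Relation.ReflTransGen.single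
            (show R' (some u) none from Or.inl ⟨rfl, hbc⟩)).trans
          (Relation.ReflTransGen.single (show R' none (some v) from Or.inl ⟨rfl, hbc⟩))
      by_cases hc2 : b = v ∧ c = u
      · rw [hc2.1, hc2.2] at hbc ⊢
        exact (Relation.ReflTransGen.single
            (show R' (some v) none from Or.inr ⟨rfl, hbc⟩)).trans
          (Relation.ReflTransGen.single (show R' none (some u) from Or.inr ⟨rfl, hbc⟩))
      · exact Relation.ReflTransGen.single (show R' (some b) (some c) from ⟨hbc, hc1, hc2⟩)
  refine ⟨R', ⟨?_, ?_, ?_⟩, ?_⟩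
  · intro a b h
    obtain _ | s := a <;> obtain _ | t := b
    · exact absurd h id
    · exact subdivide_adj_none_some.mpr (h.elim (fun hh => Or.inr hh.1) (fun hh => Or.inl hh.1))
    · exact subdivide_adj_some_none.mpr (h.elim (fun hh => Or.inl hh.1) (fun hh => Or.inr hh.1))
    · exact subdivide_adj_some_some.mpr ⟨ho1 _ _ h.1, h.2.1, h.2.2⟩
  · intro a b hadj
    obtain _ | s := a <;> obtain _ | t := b
    · exact absurd hadj (SimpleGraph.irrefl _)
    · rcases subdivide_adj_none_some.mp hadj with ht | ht
      · rw [ht]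
        rcases ho2 u v huv with hr | hr
        · exact Or.inr (Or.inl ⟨rfl, hr⟩)
        · exact Or.inl (Or.inr ⟨rfl, hr⟩)
      · rw [ht]
        rcases ho2 u v huv with hr | hr
        · exact Or.inl (Or.inl ⟨rfl, hr⟩)
        · exact Or.inr (Or.inr ⟨rfl, hr⟩)
    · rcases subdivide_adj_some_none.mp hadj with ht | ht
      · rw [ht]
        rcases ho2 u v huv with hr | hr
        · exact Or.inl (Or.inl ⟨rfl, hr⟩)
        · exact Or.inr (Or.inr ⟨rfl, hr⟩)
      · rw [ht]
        rcases ho2 u v huv with hr | hr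
        · exact Or.inr (Or.inl ⟨rfl, hr⟩)
        · exact Or.inl (Or.inr ⟨rfl, hr⟩)
    · obtain ⟨hxy, h1, h2⟩ := subdivide_adj_some_some.mp hadj
      rcases ho2 _ _ hxy with h | h
      · exact Or.inl ⟨h, h1, h2⟩
      · exact Or.inr ⟨h, fun hc => h2 ⟨hc.2, hc.1⟩, fun hc => h1 ⟨hc.2, hc.1⟩⟩
  · intro a b h h'
    obtain _ | s := a <;> obtain _ | t := b
    · exact h
    · rcases h with ⟨h1, h2⟩ | ⟨h1, h2⟩ <;> rcases h' with ⟨h3, h4⟩ | ⟨h3, h4⟩ <;>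
        first
        | exact ho3 _ _ h2 h4
        | exact ho3 _ _ h4 h2
        | exact huvne (h1.symm.trans h3)
        | exact huvne (h3.symm.trans h1)
    · rcases h with ⟨h1, h2⟩ | ⟨h1, h2⟩ <;> rcases h' with ⟨h3, h4⟩ | ⟨h3, h4⟩ <;>
        first
        | exact ho3 _ _ h2 h4
        | exact ho3 _ _ h4 h2
        | exact huvne (h1.symm.trans h3)
        | exact huvne (h3.symm.trans h1)
    · exact ho3 _ _ h.1 h'.1
  · have harc : (∀ t : V, Relation.ReflTransGen R' none (some t)) ∧
        (∀ t : V, Relation.ReflTransGen R' (some t) none) := by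
      rcases ho2 u v huv with hr | hr
      · refine ⟨fun t => Relation.ReflTransGen.head
          (show R' none (some v) from Or.inl ⟨rfl, hr⟩)
          (lift v t (rtg_iff_walk.mpr (hstr v t))), fun t =>
          (lift t u (rtg_iff_walk.mpr (hstr t u))).tail
          (show R' (some u) none from Or.inl ⟨rfl, hr⟩)⟩
      · refine ⟨fun t => Relation.ReflTransGen.head
          (show R' none (some u) from Or.inr ⟨rfl, hr⟩)
          (lift u t (rtg_iff_walk.mpr (hstr u t))), fun t =>
          (lift t v (rtg_iff_walk.mpr (hstr t v))).tail
          (show R' (some v) none from Or.inr ⟨rfl, hr⟩)⟩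
    intro a b
    refine rtg_iff_walk.mp ?_
    obtain _ | s := a <;> obtain _ | t := b
    · exact .refl
    · exact harc.1 t
    · exact harc.2 s
    · exact lift s t (rtg_iff_walk.mpr (hstr s t))


end Aux

/-- Subdividing an edge of a connected bridgeless graph keeps it connected
and bridgeless and does not decrease the oriented strong diameter. -/
theorem subdivide_oriented_sdiam_ge {V : Type*} [Fintype V]
    (G : SimpleGraph V) (u v : V) (huv : G.Adj u v)
    (hconn : G.Connected) (hbridgeless : IsBridgeless G) :
    (subdivide G u v).Connected ∧ IsBridgeless (subdivide G u v) ∧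
      orientedSDiam G ≤ orientedSDiam (subdivide G u v) := by
  refine ⟨subdivide_connected huv hconn, subdivide_bridgeless huv hbridgeless, ?_⟩
  by_cases hS' : {d | ∃ R' : Option V → Option V → Prop,
      IsOrientation (subdivide G u v) R' ∧ IsStrong R' ∧ sdiamOr R' = d}.Nonempty
  · obtain ⟨R', hor, hstr, hd⟩ := Nat.sInf_mem hS'
    have harc : R' (some u) none ∨ R' (some v) none := by
      obtain ⟨n, hw⟩ := hstr (some u) none
      cases n with
      | zero =>
        obtain ⟨f, h0, hl, -⟩ := hw
        rw [Subsingleton.elim (0 : Fin 1) (Fin.last 0), hl] at h0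
        exact absurd h0 (by simp)
      | succ m =>
        obtain ⟨f, h0, hl, hstep⟩ := hw
        have h1 := hstep (Fin.last m)
        rw [Fin.succ_last, hl] at h1
        rcases hq : f (Fin.last m).castSucc with _ | t
        · rw [hq] at h1
          exact absurd (hor.1 _ _ h1) (SimpleGraph.irrefl _)
        · rw [hq] at h1
          have hadj := hor.1 _ _ h1
          rcases subdivide_adj_some_none.mp hadj with rfl | rfl
          · exact Or.inl h1
          · exact Or.inr h1
    have hkey : ∃ R, IsOrientation G R ∧ IsStrong R ∧ sdiamOr R ≤ sdiamOr R' := by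
      rcases harc with h | h
      · exact key_lemma G u v huv R' hor hstr h
      · refine key_lemma G v u huv.symm R' ?_ hstr h
        rw [← subdivide_comm]
        exact hor
    obtain ⟨R, h1, h2, h3⟩ := hkey
    calc orientedSDiam G ≤ sdiamOr R := Nat.sInf_le ⟨R, h1, h2, rfl⟩
      _ ≤ sdiamOr R' := h3
      _ = orientedSDiam (subdivide G u v) := hd
  · have he1 : orientedSDiam (subdivide G u v) = 0 := by
      rw [Set.not_nonempty_iff_eq_empty] at hS'
      unfold orientedSDiam
      rw [hS', Nat.sInf_empty]
    have he2 : orientedSDiam G = 0 := by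
      have hemp : {d | ∃ R : V → V → Prop, IsOrientation G R ∧ IsStrong R ∧
          sdiamOr R = d} = ∅ := by
        rw [Set.eq_empty_iff_forall_notMem]
        rintro d ⟨R, hR1, hR2, -⟩
        obtain ⟨R', hq1, hq2⟩ := lift_exists G u v huv R hR1 hR2
        exact hS' ⟨sdiamOr R', R', hq1, hq2, rfl⟩
      unfold orientedSDiam
      rw [hemp, Nat.sInf_empty]
    rw [he1, he2]
end

section
/- Let G be a connected bridgeless graph, v a vertex of G, and G' the graph obtained from G by adding two new vertices v', v'' together with the edges vv', v'v'', v''v (a pendant triangle at v). Then G' is connected and bridgeless, and the oriented strong diameter of G' is at least the oriented strong diameter of G. -/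
open SimpleGraph

variable {V : Type*}

section Aux

lemma hasDirWalk_iff_rtg (R : V → V → Prop) (u v : V) :
    (∃ n, HasDirWalk R u v n) ↔ Relation.ReflTransGen R u v := by
  constructor
  · rintro ⟨n, hw⟩
    induction n generalizing u with
    | zero =>
      obtain ⟨f, h0, hl, _⟩ := hw
      have : u = v := by rw [← h0, ← hl]; rfl
      exact this ▸ Relation.ReflTransGen.refl
    | succ n ih =>
      obtain ⟨f, h0, hl, hs⟩ := hw
      refine Relation.ReflTransGen.head (b := f 1) ?_ (ih (f 1) ⟨f ∘ Fin.succ, rfl, ?_, ?_⟩)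
      · have := hs 0
        simpa [h0] using this
      · simpa using hl
      · intro i
        have := hs i.succ
        simpa only [Function.comp_apply, Fin.succ_castSucc] using this
  · intro h
    induction h with
    | refl => exact ⟨0, fun _ => u, rfl, rfl, fun i => i.elim0⟩
    | @tail b c hab hbc ih =>
      obtain ⟨n, f, h0, hl, hs⟩ := ih
      refine ⟨n + 1, Fin.snoc f c, ?_, ?_, ?_⟩
      · have : (0 : Fin (n+2)) = Fin.castSucc 0 := rfl
        rw [this, Fin.snoc_castSucc, h0]
      · exact Fin.snoc_last _ _
      · intro i
        induction i using Fin.lastCases with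
        | last =>
          have h1 : (Fin.last n).succ = Fin.last (n+1) := rfl
          rw [Fin.snoc_castSucc, hl, h1, Fin.snoc_last]
          exact hbc
        | cast j =>
          rw [Fin.succ_castSucc, Fin.snoc_castSucc, Fin.snoc_castSucc]
          exact hs j

lemma rtg_lift {W : Type*} (S : W → W → Prop) (R : V → V → Prop) (π : W → V)
    (h : ∀ a b, S a b → Relation.ReflTransGen R (π a) (π b)) :
    ∀ a b, Relation.ReflTransGen S a b → Relation.ReflTransGen R (π a) (π b) := by
  intro a b hab
  induction hab with
  | refl => exact Relation.ReflTransGen.refl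
  | tail _ hbc ih => exact ih.trans (h _ _ hbc)

lemma pt_adj_inl_inl (G : SimpleGraph V) (v : V) (x y : V) :
    (pendantTriangle G v).Adj (Sum.inl x) (Sum.inl y) ↔ G.Adj x y := by
  simp only [pendantTriangle, SimpleGraph.fromRel_adj]
  constructor
  · rintro ⟨-, h | h⟩
    · exact h
    · exact h.symm
  · intro h
    exact ⟨by simpa using h.ne, Or.inl h⟩

lemma pt_adj_inl_inr (G : SimpleGraph V) (v : V) (x : V) (i : Fin 2) :
    (pendantTriangle G v).Adj (Sum.inl x) (Sum.inr i) ↔ x = v := by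
  simp only [pendantTriangle, SimpleGraph.fromRel_adj]
  constructor
  · rintro ⟨-, h | h⟩
    · exact h
    · exact h.elim
  · intro h
    exact ⟨by simp, Or.inl h⟩

lemma pt_adj_inr_inr (G : SimpleGraph V) (v : V) (i j : Fin 2) :
    (pendantTriangle G v).Adj (Sum.inr i) (Sum.inr j) ↔ i ≠ j := by
  simp only [pendantTriangle, SimpleGraph.fromRel_adj]
  constructor
  · rintro ⟨h, -⟩
    simpa using h
  · intro h
    exact ⟨by simpa using h, Or.inl h⟩

/-- The inclusion homomorphism. -/
def ptHom (G : SimpleGraph V) (v : V) : G →g pendantTriangle G v :=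
  ⟨Sum.inl, fun h => (pt_adj_inl_inl G v _ _).mpr h⟩

lemma ptHom_injective (G : SimpleGraph V) (v : V) : Function.Injective (ptHom G v) :=
  Sum.inl_injective


lemma isStrong_iff_rtg (R : V → V → Prop) : IsStrong R ↔ ∀ u v, Relation.ReflTransGen R u v := by
  unfold IsStrong
  exact forall₂_congr fun u v => hasDirWalk_iff_rtg R u v

/-- From a strong orientation of the pendant-triangle graph, restriction gives a strong
orientation of `G` with no larger strong diameter. -/
lemma lemB [Fintype V] (G : SimpleGraph V) (v : V) (R' : (V ⊕ Fin 2) → (V ⊕ Fin 2) → Prop)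
    (hor' : IsOrientation (pendantTriangle G v) R') (hstr' : IsStrong R') :
    ∃ R : V → V → Prop, IsOrientation G R ∧ IsStrong R ∧ sdiamOr R ≤ sdiamOr R' := by
  classical
  set R : V → V → Prop := fun x y => R' (Sum.inl x) (Sum.inl y) with hR
  have horR : IsOrientation G R := by
    refine ⟨fun x y h => (pt_adj_inl_inl G v x y).mp (hor'.1 _ _ h),
      fun x y h => hor'.2.1 _ _ ((pt_adj_inl_inl G v x y).mpr h),
      fun x y h => hor'.2.2 _ _ h⟩
  set π : (V ⊕ Fin 2) → V := Sum.elim id (fun _ => v) with hπ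
  -- key : single arcs of R' project to RTG of R
  have key : ∀ a b, R' a b → Relation.ReflTransGen R (π a) (π b) := by
    rintro (x | i) (y | j) h
    · exact Relation.ReflTransGen.single h
    · have hx : x = v := (pt_adj_inl_inr G v x j).mp (hor'.1 _ _ h)
      subst hx; exact Relation.ReflTransGen.refl
    · have hy : y = v := (pt_adj_inl_inr G v y i).mp (hor'.1 _ _ h).symm
      subst hy; exact Relation.ReflTransGen.refl
    · exact Relation.ReflTransGen.refl
  have hstrR : IsStrong R := by
    rw [isStrong_iff_rtg]
    intro u w
    have h1 : Relation.ReflTransGen R' (Sum.inl u) (Sum.inl w) :=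
      (hasDirWalk_iff_rtg R' _ _).mp (hstr' _ _)
    exact rtg_lift R' R π key _ _ h1
  refine ⟨R, horR, hstrR, ?_⟩
  -- sdist comparison
  have hsd : ∀ u w : V, sdist R u w ≤ sdist R' (Sum.inl u) (Sum.inl w) := by
    intro u w
    have hne : {n | ∃ A : Set ((V ⊕ Fin 2) × (V ⊕ Fin 2)), A.Finite ∧ A.ncard = n ∧
        IsStrongSubOn R' (Sum.inl u) (Sum.inl w) A}.Nonempty := by
      refine ⟨_, {p | R' p.1 p.2}, Set.toFinite _, rfl, fun p hp => hp, ?_⟩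
      intro x _ y _
      have : Relation.ReflTransGen R' x y := (hasDirWalk_iff_rtg R' _ _).mp (hstr' _ _)
      exact Relation.ReflTransGen.mono (fun a b hab => hab) _ _ this
    obtain ⟨A', hfin, hcard, hsub⟩ := Nat.sInf_mem hne
    set A : Set (V × V) := {p | (Sum.inl p.1, Sum.inl p.2) ∈ A'} with hA
    have hemb : Function.Injective (fun p : V × V => ((Sum.inl p.1 : V ⊕ Fin 2), (Sum.inl p.2 : V ⊕ Fin 2))) := by
      intro p q hpq
      simp only [Prod.mk.injEq, Sum.inl.injEq] at hpq
      exact Prod.ext hpq.1 hpq.2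
    have himg : (fun p : V × V => ((Sum.inl p.1 : V ⊕ Fin 2), (Sum.inl p.2 : V ⊕ Fin 2))) '' A ⊆ A' := by
      rintro _ ⟨p, hp, rfl⟩; exact hp
    have hAfin : A.Finite := Set.toFinite _
    have hcardle : A.ncard ≤ A'.ncard := by
      rw [← Set.ncard_image_of_injective A hemb]
      exact Set.ncard_le_ncard himg hfin
    have hsubA : IsStrongSubOn R u w A := by
      constructor
      · rintro ⟨x, y⟩ hp
        exact hsub.1 _ hp
      · intro x hx y hy
        have hmem : ∀ z : V, z ∈ insert u (insert w (Prod.fst '' A ∪ Prod.snd '' A)) →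
            (Sum.inl z : V ⊕ Fin 2) ∈ insert (Sum.inl u) (insert (Sum.inl w)
              (Prod.fst '' A' ∪ Prod.snd '' A')) := by
          rintro z (rfl | rfl | ⟨p, hp, rfl⟩ | ⟨p, hp, rfl⟩)
          · exact Set.mem_insert _ _
          · exact Set.mem_insert_of_mem _ (Set.mem_insert _ _)
          · exact Set.mem_insert_of_mem _ (Set.mem_insert_of_mem _
              (Or.inl ⟨(Sum.inl p.1, Sum.inl p.2), hp, rfl⟩))
          · exact Set.mem_insert_of_mem _ (Set.mem_insert_of_mem _
              (Or.inr ⟨(Sum.inl p.1, Sum.inl p.2), hp, rfl⟩))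
        have h1 := hsub.2 _ (hmem x hx) _ (hmem y hy)
        have key2 : ∀ a b : V ⊕ Fin 2, (a, b) ∈ A' →
            Relation.ReflTransGen (fun p q : V => (p, q) ∈ A) (π a) (π b) := by
          rintro (x' | i) (y' | j) hab
          · exact Relation.ReflTransGen.single hab
          · have hx' : x' = v := (pt_adj_inl_inr G v x' j).mp (hor'.1 _ _ (hsub.1 _ hab))
            subst hx'; exact Relation.ReflTransGen.refl
          · have hy' : y' = v := (pt_adj_inl_inr G v y' i).mp (hor'.1 _ _ (hsub.1 _ hab)).symm
            subst hy'; exact Relation.ReflTransGen.refl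
          · exact Relation.ReflTransGen.refl
        exact rtg_lift _ _ π key2 _ _ h1
    calc sdist R u w ≤ A.ncard := Nat.sInf_le ⟨A, hAfin, rfl, hsubA⟩
      _ ≤ A'.ncard := hcardle
      _ = sdist R' (Sum.inl u) (Sum.inl w) := hcard
  apply Finset.sup_le
  rintro ⟨u, w⟩ -
  calc sdist R u w ≤ sdist R' (Sum.inl u) (Sum.inl w) := hsd u w
    _ ≤ sdiamOr R' := Finset.le_sup (f := fun p : (V ⊕ Fin 2) × (V ⊕ Fin 2) => sdist R' p.1 p.2)
        (Finset.mem_univ ((Sum.inl u : V ⊕ Fin 2), (Sum.inl w : V ⊕ Fin 2)))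

/-- A strong orientation of `G` extends to a strong orientation of the pendant-triangle
graph. -/
lemma lemA (G : SimpleGraph V) (v : V) (R : V → V → Prop)
    (horR : IsOrientation G R) (hstrR : IsStrong R) :
    ∃ R' : (V ⊕ Fin 2) → (V ⊕ Fin 2) → Prop,
      IsOrientation (pendantTriangle G v) R' ∧ IsStrong R' := by
  classical
  set R' : (V ⊕ Fin 2) → (V ⊕ Fin 2) → Prop := fun a b => match a, b with
    | Sum.inl x, Sum.inl y => R x y
    | Sum.inl x, Sum.inr i => x = v ∧ i = 0
    | Sum.inr i, Sum.inl x => x = v ∧ i = 1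
    | Sum.inr i, Sum.inr j => i = 0 ∧ j = 1 with hR'def
  refine ⟨R', ⟨?_, ?_, ?_⟩, ?_⟩
  · rintro (x | i) (y | j) h
    · exact (pt_adj_inl_inl G v x y).mpr (horR.1 _ _ h)
    · exact (pt_adj_inl_inr G v x j).mpr h.1
    · exact ((pt_adj_inl_inr G v y i).mpr h.1).symm
    · rw [h.1, h.2]; exact (pt_adj_inr_inr G v 0 1).mpr (by decide)
  · rintro (x | i) (y | j) hadj
    · rcases horR.2.1 _ _ ((pt_adj_inl_inl G v x y).mp hadj) with h | h
      · exact Or.inl h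
      · exact Or.inr h
    · have hx : x = v := (pt_adj_inl_inr G v x j).mp hadj
      subst hx
      fin_cases j
      · exact Or.inl ⟨rfl, rfl⟩
      · exact Or.inr ⟨rfl, rfl⟩
    · have hy : y = v := (pt_adj_inl_inr G v y i).mp hadj.symm
      subst hy
      fin_cases i
      · exact Or.inr ⟨rfl, rfl⟩
      · exact Or.inl ⟨rfl, rfl⟩
    · have hij : i ≠ j := (pt_adj_inr_inr G v i j).mp hadj
      fin_cases i <;> fin_cases j <;> first
        | exact absurd rfl hij
        | exact Or.inl ⟨rfl, rfl⟩
        | exact Or.inr ⟨rfl, rfl⟩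
  · rintro (x | i) (y | j) h h'
    · exact horR.2.2 _ _ h h'
    · rw [h.2] at h'
      exact absurd h'.2 (by decide)
    · rw [h.2] at h'
      exact absurd h'.2 (by decide)
    · rw [h.1, h.2] at h'
      exact absurd h'.1 (by decide)
  · rw [isStrong_iff_rtg]
    have hlift : ∀ x y : V, Relation.ReflTransGen R x y →
        Relation.ReflTransGen R' (Sum.inl x) (Sum.inl y) := by
      intro x y h
      exact rtg_lift R R' Sum.inl (fun a b hab => Relation.ReflTransGen.single hab) x y h
    have hR : ∀ x y : V, Relation.ReflTransGen R x y := fun x y =>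
      (hasDirWalk_iff_rtg R x y).mp (hstrR x y)
    have hv0 : Relation.ReflTransGen R' (Sum.inl v : V ⊕ Fin 2) (Sum.inr 0) :=
      Relation.ReflTransGen.single (show _ ∧ _ from ⟨rfl, rfl⟩)
    have h01 : Relation.ReflTransGen R' (Sum.inr 0 : V ⊕ Fin 2) (Sum.inr 1) :=
      Relation.ReflTransGen.single (show _ ∧ _ from ⟨rfl, rfl⟩)
    have h1v : Relation.ReflTransGen R' (Sum.inr 1 : V ⊕ Fin 2) (Sum.inl v) :=
      Relation.ReflTransGen.single (show _ ∧ _ from ⟨rfl, rfl⟩)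
    have hto : ∀ a : V ⊕ Fin 2, Relation.ReflTransGen R' a (Sum.inl v) := by
      rintro (x | i)
      · exact hlift x v (hR x v)
      · fin_cases i
        · exact h01.trans h1v
        · exact h1v
    have hfrom : ∀ b : V ⊕ Fin 2, Relation.ReflTransGen R' (Sum.inl v) b := by
      rintro (y | j)
      · exact hlift v y (hR v y)
      · fin_cases j
        · exact hv0
        · exact hv0.trans h01
    exact fun a b => (hto a).trans (hfrom b)

end Aux

/-- Attaching a pendant triangle at a vertex of a connected bridgeless graph
keeps it connected and bridgeless and does not decrease the oriented strong diameter. -/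
theorem pendantTriangle_oriented_sdiam_ge {V : Type*} [Fintype V]
    (G : SimpleGraph V) (v : V)
    (hconn : G.Connected) (hbridgeless : IsBridgeless G) :
    (pendantTriangle G v).Connected ∧ IsBridgeless (pendantTriangle G v) ∧
      orientedSDiam G ≤ orientedSDiam (pendantTriangle G v) := by
  classical
  have key : ∀ a : V ⊕ Fin 2, (pendantTriangle G v).Reachable a (Sum.inl v) := by
    rintro (x | i)
    · exact Reachable.map (ptHom G v) (hconn.preconnected x v)
    · exact (((pt_adj_inl_inr G v v i).mpr rfl).symm).reachable
  refine ⟨?_, ?_, ?_⟩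
  · -- Connected
    rw [connected_iff]
    exact ⟨fun a b => (key a).trans (key b).symm, ⟨Sum.inl v⟩⟩
  · -- Bridgeless
    intro e
    induction e using Sym2.ind with
    | _ a b =>
      intro hbr
      have hadj : (pendantTriangle G v).Adj a b := hbr.reachable_iff_adj.mp ((key a).trans (key b).symm)
      have hcyc := (isBridge_iff_forall_cycle_notMem hadj).mp hbr
      -- the triangle cycle
      have h01 : (pendantTriangle G v).Adj (Sum.inl v) (Sum.inr 0) := (pt_adj_inl_inr G v v 0).mpr rfl
      have h12 : (pendantTriangle G v).Adj (Sum.inr 0) (Sum.inr 1) := (pt_adj_inr_inr G v 0 1).mpr (by decide)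
      have h20 : (pendantTriangle G v).Adj (Sum.inr 1) (Sum.inl v) := ((pt_adj_inl_inr G v v 1).mpr rfl).symm
      set w : (pendantTriangle G v).Walk (Sum.inl v) (Sum.inl v) :=
        Walk.cons h01 (Walk.cons h12 (Walk.cons h20 Walk.nil)) with hw
      have hwc : w.IsCycle := by
        rw [Walk.isCycle_def]
        refine ⟨⟨?_⟩, by simp [hw], ?_⟩
        · simp [hw, Walk.edges]
        · simp [hw, Walk.support]
      match a, b with
      | Sum.inl x, Sum.inl y =>
        have hGadj : G.Adj x y := (pt_adj_inl_inl G v x y).mp hadj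
        have hnb := hbridgeless s(x, y)
        rw [isBridge_iff_forall_cycle_notMem hGadj] at hnb
        push_neg at hnb
        obtain ⟨u, p, hp, he⟩ := hnb
        refine hcyc (p.map (ptHom G v)) (hp.map (ptHom_injective G v)) ?_
        rw [Walk.edges_map]
        exact List.mem_map.mpr ⟨s(x, y), he, rfl⟩
      | Sum.inl x, Sum.inr i =>
        have hx : x = v := (pt_adj_inl_inr G v x i).mp hadj
        subst hx
        refine hcyc w hwc ?_
        fin_cases i
        · simp [hw, Walk.edges]
        · simp [hw, Walk.edges, Sym2.eq_swap]
      | Sum.inr i, Sum.inl x =>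
        have hx : x = v := (pt_adj_inl_inr G v x i).mp hadj.symm
        subst hx
        refine hcyc w hwc ?_
        fin_cases i
        · simp [hw, Walk.edges, Sym2.eq_swap]
        · simp [hw, Walk.edges]
      | Sum.inr i, Sum.inr j =>
        have hij : i ≠ j := (pt_adj_inr_inr G v i j).mp hadj
        refine hcyc w hwc ?_
        have he : s(Sum.inr 0, Sum.inr 1) ∈ w.edges := by
          show s(Sum.inr 0, Sum.inr 1) ∈ [s(Sum.inl v, Sum.inr 0), s(Sum.inr 0, Sum.inr 1),
            s((Sum.inr 1 : V ⊕ Fin 2), Sum.inl v)]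
          simp
        fin_cases i <;> fin_cases j
        · simp at hij
        · exact he
        · rw [Sym2.eq_swap]; exact he
        · simp at hij
  · -- oriented strong diameter
    by_cases hS' : {d | ∃ R' : (V ⊕ Fin 2) → (V ⊕ Fin 2) → Prop,
        IsOrientation (pendantTriangle G v) R' ∧ IsStrong R' ∧ sdiamOr R' = d}.Nonempty
    · obtain ⟨R', hor', hstr', hd⟩ := Nat.sInf_mem hS'
      obtain ⟨R, horR, hstrR, hle⟩ := lemB G v R' hor' hstr'
      calc orientedSDiam G ≤ sdiamOr R := Nat.sInf_le ⟨R, horR, hstrR, rfl⟩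
        _ ≤ sdiamOr R' := hle
        _ = orientedSDiam (pendantTriangle G v) := hd
    · have hS : {d | ∃ R : V → V → Prop,
          IsOrientation G R ∧ IsStrong R ∧ sdiamOr R = d} = ∅ := by
        rw [Set.eq_empty_iff_forall_notMem]
        rintro d ⟨R, horR, hstrR, -⟩
        obtain ⟨R', hor', hstr'⟩ := lemA G v R horR hstrR
        exact hS' ⟨sdiamOr R', R', hor', hstr', rfl⟩
      unfold orientedSDiam
      rw [hS, Nat.sInf_empty]
      exact Nat.zero_le _
end
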